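/- Let Ω be a bounded domain in ℝⁿ with center of mass at the origin. Then the moment of inertia I(Ω) = ∫_Ω |x|² dx satisfies I(Ω) ≥ (n/(n+2)) V(Ω) (V(Ω)/Bₙ)^{2/n}, where V(Ω) is the volume of Ω and Bₙ is the volume of the unit ball in ℝⁿ. -/

import Mathlib

open MeasureTheory Set

/-- The volume of the unit ball in `ℝⁿ`. -/
noncomputable def unitBallVol (n : ℕ) : ℝ :=
  (volume (Metric.ball (0 : EuclideanSpace ℝ (Fin n)) 1)).toReal

section aux

variable (n : ℕ)

lemma aux_ball_moment (hn : 1 ≤ n) (R : ℝ) (hR : 0 < R) :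
    ∫ x in Metric.ball (0 : EuclideanSpace ℝ (Fin n)) R, ‖x‖ ^ 2
      = (n : ℝ) / (n + 2) * unitBallVol n * R ^ (n + 2) := by
  haveI : Nonempty (Fin n) := Fin.pos_iff_nonempty.mp hn
  haveI : Nontrivial (EuclideanSpace ℝ (Fin n)) := inferInstance
  have hdim : Module.finrank ℝ (EuclideanSpace ℝ (Fin n)) = n := by
    simp [finrank_euclideanSpace]
  set f : ℝ → ℝ := (Set.Iio R).indicator (fun r => r ^ 2) with hf
  have h1 : ∫ x in Metric.ball (0 : EuclideanSpace ℝ (Fin n)) R, ‖x‖ ^ 2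
      = ∫ x : EuclideanSpace ℝ (Fin n), f ‖x‖ := by
    rw [← integral_indicator measurableSet_ball]
    congr 1
    ext x
    simp [hf, Set.indicator, Metric.mem_ball, dist_zero_right]
  rw [h1, integral_fun_norm_addHaar volume f, hdim]
  have h2 : ∀ y : ℝ, y ^ (n - 1) • f y
      = (Set.Iio R).indicator (fun y => y ^ (n + 1)) y := by
    intro y
    simp only [hf, Set.indicator, smul_eq_mul]
    split_ifs with h
    · rw [← pow_add]
      congr 1
      omega
    · ring
  rw [show (∫ y in Ioi (0:ℝ), y ^ (n - 1) • f y)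
      = ∫ y in Ioi (0:ℝ), (Set.Iio R).indicator (fun y => y ^ (n + 1)) y by
    exact integral_congr_ae (Filter.Eventually.of_forall fun y => h2 y)]
  rw [integral_indicator measurableSet_Iio]
  rw [Measure.restrict_restrict measurableSet_Iio]
  have hIoo : Set.Iio R ∩ Set.Ioi (0:ℝ) = Set.Ioo 0 R := by
    ext y; simp [and_comm]
  rw [hIoo, ← integral_Ioc_eq_integral_Ioo,
    ← intervalIntegral.integral_of_le hR.le, integral_pow]
  simp only [smul_eq_mul, nsmul_eq_mul, unitBallVol]
  have hn2 : ((n:ℝ) + 2) ≠ 0 := by positivity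
  field_simp
  simp only [measureReal_def]
  push_cast
  ring

lemma aux_compare (A : Set (EuclideanSpace ℝ (Fin n))) (mA : MeasurableSet A)
    (hIntA : IntegrableOn (fun x => ‖x‖ ^ 2) A volume)
    (hfinA : volume A ≠ ⊤)
    (R : ℝ) (hR : 0 ≤ R)
    (hvol : volume A = volume (Metric.ball (0 : EuclideanSpace ℝ (Fin n)) R)) :
    ∫ x in Metric.ball (0 : EuclideanSpace ℝ (Fin n)) R, ‖x‖ ^ 2
      ≤ ∫ x in A, ‖x‖ ^ 2 := by
  set B := Metric.ball (0 : EuclideanSpace ℝ (Fin n)) R with hB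
  have mB : MeasurableSet B := measurableSet_ball
  have hfinB : volume B ≠ ⊤ := (Metric.isBounded_ball).measure_lt_top.ne
  have hIntB : IntegrableOn (fun x => ‖x‖ ^ 2) B volume := by
    exact (ContinuousOn.integrableOn_compact
      (isCompact_closedBall (0 : EuclideanSpace ℝ (Fin n)) R)
      ((continuous_norm.pow 2).continuousOn)).mono_set Metric.ball_subset_closedBall
  -- volume of symmetric differences agree
  have key : volume (A \ B) = volume (B \ A) := by
    have h1 : volume (A ∩ B) + volume (A \ B) = volume A :=
      measure_inter_add_diff A mB
    have h2 : volume (B ∩ A) + volume (B \ A) = volume B :=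
      measure_inter_add_diff B mA
    rw [Set.inter_comm] at h2
    have hABfin : volume (A ∩ B) ≠ ⊤ :=
      fun h => hfinA (top_le_iff.mp (h ▸ measure_mono Set.inter_subset_left))
    have : volume (A ∩ B) + volume (A \ B) = volume (A ∩ B) + volume (B \ A) := by
      rw [h1, h2, hvol]
    exact (ENNReal.add_right_inj hABfin).mp this
  have hfinAB : volume (A \ B) ≠ ⊤ :=
    fun h => hfinA (top_le_iff.mp (h ▸ measure_mono Set.diff_subset))
  have hfinBA : volume (B \ A) ≠ ⊤ :=
    fun h => hfinB (top_le_iff.mp (h ▸ measure_mono Set.diff_subset))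
  have split1 : ∫ x in A, ‖x‖ ^ 2
      = (∫ x in A ∩ B, ‖x‖ ^ 2) + ∫ x in A \ B, ‖x‖ ^ 2 :=
    (integral_inter_add_diff mB hIntA).symm
  have split2 : ∫ x in B, ‖x‖ ^ 2
      = (∫ x in A ∩ B, ‖x‖ ^ 2) + ∫ x in B \ A, ‖x‖ ^ 2 := by
    rw [← Set.inter_comm]
    exact (integral_inter_add_diff mA hIntB).symm
  have lower : R ^ 2 * (volume (A \ B)).toReal ≤ ∫ x in A \ B, ‖x‖ ^ 2 := by
    apply setIntegral_ge_of_const_le_real (mA.diff mB) hfinAB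
    · intro x hx
      have : R ≤ ‖x‖ := by
        have := hx.2
        simp only [hB, Metric.mem_ball, dist_zero_right, not_lt] at this
        exact this
      exact pow_le_pow_left₀ hR this 2
    · exact hIntA.mono_set Set.diff_subset
  have upper : ∫ x in B \ A, ‖x‖ ^ 2 ≤ R ^ 2 * (volume (B \ A)).toReal := by
    rw [mul_comm, ← smul_eq_mul, ← measureReal_def, ← setIntegral_const (R ^ 2)]
    apply setIntegral_mono_on (hIntB.mono_set Set.diff_subset)
      (integrableOn_const hfinBA) (mB.diff mA)
    intro x hx
    have : ‖x‖ ≤ R := by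
      have := hx.1
      simp only [hB, Metric.mem_ball, dist_zero_right] at this
      exact this.le
    exact pow_le_pow_left₀ (norm_nonneg x) this 2
  rw [split1, split2]
  have : ∫ x in B \ A, ‖x‖ ^ 2 ≤ ∫ x in A \ B, ‖x‖ ^ 2 := by
    calc ∫ x in B \ A, ‖x‖ ^ 2 ≤ R ^ 2 * (volume (B \ A)).toReal := upper
      _ = R ^ 2 * (volume (A \ B)).toReal := by rw [key]
      _ ≤ ∫ x in A \ B, ‖x‖ ^ 2 := lower
  linarith

end aux

/-- The moment of inertia of a domain with center of mass at the origin is at least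
that of the ball of the same volume (inequality (2.1)). -/
theorem moment_of_inertia_lower_bound (n : ℕ) (hn : 1 ≤ n)
    (Ω : Set (EuclideanSpace ℝ (Fin n))) (hΩ : IsOpen Ω) (hne : Ω.Nonempty)
    (hbd : Bornology.IsBounded Ω)
    (hcm : (∫ x in Ω, x : EuclideanSpace ℝ (Fin n)) = 0) :
    ∫ x in Ω, ‖x‖ ^ 2 ≥
      ((n : ℝ) / (n + 2)) * (volume Ω).toReal *
        ((volume Ω).toReal / unitBallVol n) ^ ((2 : ℝ) / n) := by
  haveI : Nonempty (Fin n) := Fin.pos_iff_nonempty.mp hn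
  have hdim : Module.finrank ℝ (EuclideanSpace ℝ (Fin n)) = n := by
    simp [finrank_euclideanSpace]
  set V : ℝ := (volume Ω).toReal with hV
  have hfin : volume Ω ≠ ⊤ := hbd.measure_lt_top.ne
  have hVpos : 0 < V := by
    refine ENNReal.toReal_pos ?_ hfin
    exact (hΩ.measure_pos volume hne).ne'
  have hBpos : 0 < unitBallVol n := by
    refine ENNReal.toReal_pos ?_ Metric.isBounded_ball.measure_lt_top.ne
    exact (Metric.measure_ball_pos volume 0 one_pos).ne'
  set R : ℝ := (V / unitBallVol n) ^ ((1 : ℝ) / n) with hRdef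
  have hRpos : 0 < R := Real.rpow_pos_of_pos (div_pos hVpos hBpos) _
  have hRn : R ^ n = V / unitBallVol n := by
    rw [hRdef, ← Real.rpow_natCast ((V / unitBallVol n) ^ ((1:ℝ)/n)) n,
      ← Real.rpow_mul (div_pos hVpos hBpos).le]
    rw [one_div, inv_mul_cancel₀ (by positivity : (n:ℝ) ≠ 0)]
    exact Real.rpow_one _
  have hR2 : R ^ 2 = (V / unitBallVol n) ^ ((2 : ℝ) / n) := by
    rw [hRdef, ← Real.rpow_natCast ((V / unitBallVol n) ^ ((1:ℝ)/n)) 2,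
      ← Real.rpow_mul (div_pos hVpos hBpos).le]
    norm_num
    congr 1
    ring
  have hvolball : volume (Metric.ball (0 : EuclideanSpace ℝ (Fin n)) R) = volume Ω := by
    rw [Measure.addHaar_ball_of_pos volume 0 hRpos, hdim, hRn,
      show volume (Metric.ball (0 : EuclideanSpace ℝ (Fin n)) 1)
          = ENNReal.ofReal (unitBallVol n) from
        (ENNReal.ofReal_toReal Metric.isBounded_ball.measure_lt_top.ne).symm,
      ← ENNReal.ofReal_mul (by positivity), div_mul_cancel₀ _ hBpos.ne', hV,
      ENNReal.ofReal_toReal hfin]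
  obtain ⟨M, hM⟩ := hbd.subset_closedBall 0
  have hIntΩ : IntegrableOn (fun x => ‖x‖ ^ 2) Ω volume := by
    apply (ContinuousOn.integrableOn_compact
      (isCompact_closedBall (0 : EuclideanSpace ℝ (Fin n)) M)
      ((continuous_norm.pow 2).continuousOn)).mono_set hM
  have hcmp := aux_compare n Ω hΩ.measurableSet hIntΩ hfin R hRpos.le hvolball.symm
  have hmom := aux_ball_moment n hn R hRpos
  rw [hmom] at hcmp
  refine le_trans (le_of_eq ?_) hcmp
  rw [← hR2, show R ^ (n + 2) = R ^ n * R ^ 2 by ring, hRn]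
  field_simp
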